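/- arXiv:1211.2927 — 3 statements merged into one kernel-verified Lean document; each statement's English description precedes it below -/
import Mathlib

section
/- The closure of the union D_0(μ) = ⋃_{α ∈ (0,1]} D_α(μ) equals S(μ), the intersection of all closed half-spaces of full μ-measure (i.e., the closed convex hull of the support of μ). -/
open MeasureTheory Set

noncomputable def trimmedRegion (d : ℕ) (μ : Measure (EuclideanSpace ℝ (Fin d))) (α : ℝ) :
    Set (EuclideanSpace ℝ (Fin d)) :=
  {y | ∃ g : EuclideanSpace ℝ (Fin d) → ℝ, Measurable g ∧ (∀ x, g x ∈ Set.Icc (0:ℝ) 1) ∧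
    (∫ x, g x ∂μ) = α ∧ y = α⁻¹ • ∫ x, g x • x ∂μ}

namespace TrimmedAux

variable {d : ℕ} {μ : Measure (EuclideanSpace ℝ (Fin d))}

lemma intg_smul (hmom : Integrable (fun x => ‖x‖) μ)
    {g : EuclideanSpace ℝ (Fin d) → ℝ}
    (hg : Measurable g) (hg01 : ∀ x, g x ∈ Set.Icc (0:ℝ) 1) :
    Integrable (fun x => g x • x) μ := by
  refine hmom.mono' (hg.aestronglyMeasurable.smul aestronglyMeasurable_id) ?_
  refine Filter.Eventually.of_forall fun x => ?_
  rw [norm_smul]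
  calc ‖g x‖ * ‖x‖ ≤ 1 * ‖x‖ := by
        gcongr
        rw [Real.norm_eq_abs, abs_of_nonneg (hg01 x).1]
        exact (hg01 x).2
    _ = ‖x‖ := one_mul _

lemma intg_g [IsProbabilityMeasure μ] {g : EuclideanSpace ℝ (Fin d) → ℝ}
    (hg : Measurable g) (hg01 : ∀ x, g x ∈ Set.Icc (0:ℝ) 1) :
    Integrable g μ := by
  refine (integrable_const (1:ℝ)).mono' hg.aestronglyMeasurable ?_
  refine Filter.Eventually.of_forall fun x => ?_
  rw [Real.norm_eq_abs, abs_of_nonneg (hg01 x).1]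
  exact (hg01 x).2

lemma inner_lower [IsProbabilityMeasure μ] (hmom : Integrable (fun x => ‖x‖) μ)
    {α : ℝ} (hα : α ∈ Set.Ioc (0:ℝ) 1) {y : EuclideanSpace ℝ (Fin d)}
    (hy : y ∈ trimmedRegion d μ α) {u : EuclideanSpace ℝ (Fin d)} {a : ℝ}
    (hH : μ {x | a ≤ (inner ℝ x u : ℝ)} = 1) : a ≤ (inner ℝ y u : ℝ) := by
  obtain ⟨g, hg, hg01, hint, rfl⟩ := hy
  have hmeasH : MeasurableSet {x : EuclideanSpace ℝ (Fin d) | a ≤ (inner ℝ x u : ℝ)} := by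
    have : Continuous fun x : EuclideanSpace ℝ (Fin d) => (inner ℝ x u : ℝ) :=
      Continuous.inner continuous_id continuous_const
    exact (isClosed_le continuous_const this).measurableSet
  have hae : ∀ᵐ x ∂μ, a ≤ (inner ℝ x u : ℝ) := by
    have := (prob_compl_eq_zero_iff hmeasH).2 hH
    exact (ae_iff.2 (by simpa [Set.compl_setOf, not_le] using this))
  have hIsmul : Integrable (fun x => g x • x) μ := intg_smul hmom hg hg01
  have h1 : (inner ℝ (∫ x, g x • x ∂μ) u : ℝ) = ∫ x, g x * (inner ℝ x u : ℝ) ∂μ := by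
    rw [real_inner_comm, ← integral_inner hIsmul u]
    congr 1; funext x
    rw [real_inner_comm, real_inner_smul_left]
  have hInt2 : Integrable (fun x => g x * (inner ℝ x u : ℝ)) μ := by
    refine (hmom.const_mul ‖u‖).mono' ((hg.mul (Continuous.measurable
      (Continuous.inner continuous_id continuous_const))).aestronglyMeasurable) ?_
    refine Filter.Eventually.of_forall fun x => ?_
    rw [Real.norm_eq_abs, abs_mul]
    have h1 : |g x| ≤ 1 := by rw [abs_of_nonneg (hg01 x).1]; exact (hg01 x).2
    have h2 : |(inner ℝ x u : ℝ)| ≤ ‖x‖ * ‖u‖ := abs_real_inner_le_norm x u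
    calc |g x| * |(inner ℝ x u : ℝ)| ≤ 1 * (‖x‖ * ‖u‖) :=
          mul_le_mul h1 h2 (abs_nonneg _) one_pos.le
      _ = ‖u‖ * ‖x‖ := by ring
  have key : a * α ≤ ∫ x, g x * (inner ℝ x u : ℝ) ∂μ := by
    have : ∫ x, a * g x ∂μ ≤ ∫ x, g x * (inner ℝ x u : ℝ) ∂μ := by
      refine integral_mono_ae ((intg_g hg hg01).const_mul a) hInt2 ?_
      filter_upwards [hae] with x hx
      calc a * g x = g x * a := mul_comm _ _
        _ ≤ g x * (inner ℝ x u : ℝ) := mul_le_mul_of_nonneg_left hx (hg01 x).1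
    rwa [integral_const_mul, hint] at this
  rw [real_inner_smul_left, h1]
  calc a = (a * α) * α⁻¹ := by rw [mul_assoc, mul_inv_cancel₀ hα.1.ne', mul_one]
    _ ≤ (∫ x, g x * (inner ℝ x u : ℝ) ∂μ) * α⁻¹ :=
        mul_le_mul_of_nonneg_right key (inv_nonneg.2 hα.1.le)
    _ = α⁻¹ * ∫ x, g x * (inner ℝ x u : ℝ) ∂μ := mul_comm _ _

lemma convexD [IsProbabilityMeasure μ] (hmom : Integrable (fun x => ‖x‖) μ) :
    Convex ℝ (⋃ α ∈ Set.Ioc (0:ℝ) 1, trimmedRegion d μ α) := by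
  rintro z₁ hz₁ z₂ hz₂ t s ht hs hts
  simp only [Set.mem_iUnion] at hz₁ hz₂ ⊢
  obtain ⟨α₁, hα₁, g₁, hg₁, hg₁01, hint₁, hz₁eq⟩ := hz₁
  obtain ⟨α₂, hα₂, g₂, hg₂, hg₂01, hint₂, hz₂eq⟩ := hz₂
  set c₁ : ℝ := t / α₁ with hc₁
  set c₂ : ℝ := s / α₂ with hc₂
  have hα₁pos := hα₁.1
  have hα₂pos := hα₂.1
  have hc₁0 : 0 ≤ c₁ := div_nonneg ht hα₁pos.le
  have hc₂0 : 0 ≤ c₂ := div_nonneg hs hα₂pos.le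
  set M : ℝ := c₁ + c₂ with hM
  have htc : t ≤ c₁ := by
    rw [hc₁, le_div_iff₀ hα₁pos]
    nlinarith [hα₁.2]
  have hsc : s ≤ c₂ := by
    rw [hc₂, le_div_iff₀ hα₂pos]
    nlinarith [hα₂.2]
  have hM1 : 1 ≤ M := by rw [hM, ← hts]; linarith
  have hMpos : 0 < M := lt_of_lt_of_le one_pos hM1
  have hI₁ : Integrable (fun x => g₁ x • x) μ := intg_smul hmom hg₁ hg₁01
  have hI₂ : Integrable (fun x => g₂ x • x) μ := intg_smul hmom hg₂ hg₂01
  refine ⟨M⁻¹, ⟨inv_pos.2 hMpos, inv_le_one_of_one_le₀ hM1⟩,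
    fun x => M⁻¹ * (c₁ * g₁ x + c₂ * g₂ x), ?_, ?_, ?_, ?_⟩
  · exact (measurable_const.mul ((measurable_const.mul hg₁).add (measurable_const.mul hg₂)))
  · intro x
    have h1 := (hg₁01 x); have h2 := (hg₂01 x)
    constructor
    · have : 0 ≤ c₁ * g₁ x + c₂ * g₂ x :=
        add_nonneg (mul_nonneg hc₁0 h1.1) (mul_nonneg hc₂0 h2.1)
      positivity
    · have hle : c₁ * g₁ x + c₂ * g₂ x ≤ M := by
        rw [hM]
        have := mul_le_mul_of_nonneg_left h1.2 hc₁0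
        have := mul_le_mul_of_nonneg_left h2.2 hc₂0
        nlinarith
      calc M⁻¹ * (c₁ * g₁ x + c₂ * g₂ x) ≤ M⁻¹ * M :=
            mul_le_mul_of_nonneg_left hle (inv_nonneg.2 hMpos.le)
        _ = 1 := inv_mul_cancel₀ hMpos.ne'
  · rw [integral_const_mul, integral_add ((intg_g hg₁ hg₁01).const_mul c₁)
      ((intg_g hg₂ hg₂01).const_mul c₂), integral_const_mul, integral_const_mul, hint₁, hint₂]
    rw [hc₁, hc₂]
    field_simp
    linarith
  · have hfun : (fun x : EuclideanSpace ℝ (Fin d) => (M⁻¹ * (c₁ * g₁ x + c₂ * g₂ x)) • x)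
        = fun x => (M⁻¹ * c₁) • (g₁ x • x) + (M⁻¹ * c₂) • (g₂ x • x) := by
      funext x
      rw [smul_smul, smul_smul, ← add_smul]
      congr 1
      ring
    have hIs₁ : Integrable (fun x => (M⁻¹ * c₁) • (g₁ x • x)) μ := by
      exact hI₁.smul (M⁻¹ * c₁)
    have hIs₂ : Integrable (fun x => (M⁻¹ * c₂) • (g₂ x • x)) μ := by
      exact hI₂.smul (M⁻¹ * c₂)
    rw [hfun, integral_add hIs₁ hIs₂, integral_smul, integral_smul,
      hz₁eq, hz₂eq, inv_inv, smul_add, smul_smul, smul_smul, smul_smul, smul_smul]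
    congr 1
    · congr 1
      rw [hc₁]
      field_simp
    · congr 1
      rw [hc₂]
      field_simp

end TrimmedAux

theorem closure_union_trimmed_eq (d : ℕ) (μ : Measure (EuclideanSpace ℝ (Fin d)))
    [IsProbabilityMeasure μ] (hmom : Integrable (fun x => ‖x‖) μ) :
    closure (⋃ α ∈ Set.Ioc (0:ℝ) 1, trimmedRegion d μ α)
      = ⋂₀ {H : Set (EuclideanSpace ℝ (Fin d)) |
          (∃ u a, H = {x | a ≤ (inner ℝ x u : ℝ)}) ∧ μ H = 1} := by
  set D := ⋃ α ∈ Set.Ioc (0:ℝ) 1, trimmedRegion d μ α with hD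
  apply Set.Subset.antisymm
  · refine closure_minimal ?_ (isClosed_sInter ?_)
    · intro y hy
      rintro H ⟨⟨u, a, rfl⟩, hH⟩
      rw [hD] at hy
      simp only [Set.mem_iUnion] at hy
      obtain ⟨α, hα, hyα⟩ := hy
      exact TrimmedAux.inner_lower hmom hα hyα hH
    · rintro H ⟨⟨u, a, rfl⟩, -⟩
      exact isClosed_le continuous_const (Continuous.inner continuous_id continuous_const)
  · intro y hy
    by_contra hc
    obtain ⟨f, u, hfy, hfb⟩ := geometric_hahn_banach_point_closed
      ((TrimmedAux.convexD hmom).closure) isClosed_closure hc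
    set v := (InnerProductSpace.toDual ℝ _).symm f with hv
    have hvf : ∀ x, (inner ℝ v x : ℝ) = f x := fun x => InnerProductSpace.toDual_symm_apply
    set A := {x : EuclideanSpace ℝ (Fin d) | (inner ℝ x v : ℝ) < u} with hA
    have hAmeas : MeasurableSet A :=
      (isOpen_lt (Continuous.inner continuous_id continuous_const) continuous_const).measurableSet
    have hA0 : μ A = 0 := by
      by_contra hA0
      set α := (μ A).toReal with hα
      have hαpos : 0 < α := ENNReal.toReal_pos hA0 (measure_ne_top μ A)
      have hα1 : α ≤ 1 := by
        have h := prob_le_one (μ := μ) (s := A)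
        have := ENNReal.toReal_mono ENNReal.one_ne_top h
        simpa using this
      set g : EuclideanSpace ℝ (Fin d) → ℝ := A.indicator 1 with hg
      have hgmeas : Measurable g := measurable_const.indicator hAmeas
      have hg01 : ∀ x, g x ∈ Set.Icc (0:ℝ) 1 := by
        intro x
        rw [hg]
        by_cases hx : x ∈ A <;> simp [Set.indicator_apply, hx]
      have hgint : ∫ x, g x ∂μ = α := integral_indicator_one hAmeas
      set z := α⁻¹ • ∫ x, g x • x ∂μ with hz
      have hzD : z ∈ D := by
        rw [hD]
        simp only [Set.mem_iUnion]
        exact ⟨α, ⟨hαpos, hα1⟩, g, hgmeas, hg01, hgint, rfl⟩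
      have hlt := hfb z (subset_closure hzD)
      have hsm : (fun x => g x • x) = A.indicator (fun x : EuclideanSpace ℝ (Fin d) => x) := by
        funext x
        rw [hg]
        by_cases hx : x ∈ A <;> simp [Set.indicator_apply, hx]
      have hint_id : Integrable (fun x : EuclideanSpace ℝ (Fin d) => x) μ :=
        (integrable_norm_iff aestronglyMeasurable_id).1 hmom
      have hfz : f z = α⁻¹ * ∫ x in A, (inner ℝ v x : ℝ) ∂μ := by
        rw [← hvf, hz, real_inner_smul_right]
        congr 1
        rw [← integral_inner (TrimmedAux.intg_smul hmom hgmeas hg01) v]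
        rw [show (fun x => (inner ℝ v (g x • x) : ℝ))
            = A.indicator (fun x => (inner ℝ v x : ℝ)) from by
          funext x
          rw [hg]
          by_cases hx : x ∈ A <;> simp [Set.indicator_apply, hx]]
        exact integral_indicator hAmeas
      have hbound : ∫ x in A, (inner ℝ v x : ℝ) ∂μ ≤ α * u := by
        have h1 : IntegrableOn (fun x => (inner ℝ v x : ℝ)) A μ := by
          have : Integrable (fun x => (inner ℝ v x : ℝ)) μ := by
            have := ContinuousLinearMap.integrable_comp (innerSL ℝ v) hint_id
            simpa using this
          exact this.integrableOn
        have h2 : IntegrableOn (fun _ => u) A μ :=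
          integrableOn_const (measure_ne_top μ A)
        have h3 := setIntegral_mono_on h1 h2 hAmeas (fun x hx => by
          rw [real_inner_comm]
          exact le_of_lt hx)
        rw [setIntegral_const] at h3
        calc ∫ x in A, (inner ℝ v x : ℝ) ∂μ ≤ (μ A).toReal • u := h3
          _ = α * u := by rw [hα, smul_eq_mul]
      have : f z ≤ u := by
        rw [hfz]
        calc α⁻¹ * ∫ x in A, (inner ℝ v x : ℝ) ∂μ ≤ α⁻¹ * (α * u) :=
              mul_le_mul_of_nonneg_left hbound (inv_nonneg.2 hαpos.le)
          _ = u := by field_simp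
      linarith
    have hHfull : μ {x : EuclideanSpace ℝ (Fin d) | u ≤ (inner ℝ x v : ℝ)} = 1 := by
      have hcompl : {x : EuclideanSpace ℝ (Fin d) | u ≤ (inner ℝ x v : ℝ)} = Aᶜ := by
        ext x
        simp [hA, not_lt]
      rw [hcompl, prob_compl_eq_one_iff hAmeas]
      exact hA0
    have hyH := hy {x : EuclideanSpace ℝ (Fin d) | u ≤ (inner ℝ x v : ℝ)} ⟨⟨v, u, rfl⟩, hHfull⟩
    have : u ≤ (inner ℝ y v : ℝ) := hyH
    rw [real_inner_comm, hvf] at this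
    linarith
end

section
/- Under the continuity assumption μ({x : ⟨x,u⟩ = a}) = 0 for all u ≠ 0 and a ∈ ℝ, the maximizer in the previous optimization is essentially unique: if g: ℝ^d → [0,1] with ∫g dμ = μ(A) (A = {x : ⟨x,u⟩ ≥ a}, u ≠ 0, μ(A) ∈ (0,1)) satisfies ∫ g(x)⟨x,u⟩ dμ(x) = ∫_A ⟨x,u⟩ dμ(x), then g = 1_A μ-almost everywhere. -/
open MeasureTheory Set

theorem halfspace_maximizer_unique (d : ℕ) (μ : Measure (EuclideanSpace ℝ (Fin d)))
    [IsProbabilityMeasure μ] (hmom : Integrable (fun x => ‖x‖) μ)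
    (hcont : ∀ v : EuclideanSpace ℝ (Fin d), v ≠ 0 → ∀ b : ℝ,
      μ {x | (inner ℝ x v : ℝ) = b} = 0)
    (u : EuclideanSpace ℝ (Fin d)) (hu : u ≠ 0) (a : ℝ)
    (hα : (μ {x | a ≤ (inner ℝ x u : ℝ)}).toReal ∈ Set.Ioo (0:ℝ) 1)
    (g : EuclideanSpace ℝ (Fin d) → ℝ) (hg : Measurable g)
    (hg01 : ∀ x, g x ∈ Set.Icc (0:ℝ) 1)
    (hgint : (∫ x, g x ∂μ) = (μ {x | a ≤ (inner ℝ x u : ℝ)}).toReal)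
    (heq : (∫ x, g x * (inner ℝ x u : ℝ) ∂μ)
      = ∫ x in {x | a ≤ (inner ℝ x u : ℝ)}, (inner ℝ x u : ℝ) ∂μ) :
    g =ᵐ[μ] Set.indicator {x | a ≤ (inner ℝ x u : ℝ)} (fun _ => (1:ℝ)) := by
  set f : EuclideanSpace ℝ (Fin d) → ℝ := fun x => (inner ℝ x u : ℝ) with hf_def
  set A : Set (EuclideanSpace ℝ (Fin d)) := {x | a ≤ f x} with hA_def
  have hfcont : Continuous f := continuous_inner.comp (continuous_id.prodMk continuous_const)
  have hfmeas : Measurable f := hfcont.measurable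
  have hAmeas : MeasurableSet A := hfmeas measurableSet_Ici
  -- integrability of f
  have hfint : Integrable f μ := by
    refine (hmom.const_mul ‖u‖).mono (hfcont.aestronglyMeasurable) ?_
    filter_upwards with x
    simp only [Real.norm_eq_abs, norm_mul]
    calc ‖f x‖ ≤ ‖x‖ * ‖u‖ := norm_inner_le_norm x u
      _ ≤ |‖u‖| * |‖x‖| := by rw [abs_of_nonneg (norm_nonneg _), abs_of_nonneg (norm_nonneg _)]; ring_nf; exact le_refl _
  have hfaint : Integrable (fun x => f x - a) μ := hfint.sub (integrable_const a)
  -- the nonnegative function h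
  set h : EuclideanSpace ℝ (Fin d) → ℝ :=
    fun x => (A.indicator (fun _ => (1:ℝ)) x - g x) * (f x - a) with hh_def
  have hbdd1 : ∀ x, ‖A.indicator (fun _ => (1:ℝ)) x - g x‖ ≤ 2 := by
    intro x
    have h1 : A.indicator (fun _ => (1:ℝ)) x ∈ Set.Icc (0:ℝ) 1 := by
      by_cases hx : x ∈ A <;> simp [hx]
    have h2 := hg01 x
    rw [Real.norm_eq_abs, abs_le]
    constructor <;> nlinarith [h1.1, h1.2, h2.1, h2.2]
  have hmeas1 : Measurable (fun x => A.indicator (fun _ => (1:ℝ)) x - g x) :=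
    (measurable_const.indicator hAmeas).sub hg
  have hhint : Integrable h μ := by
    refine hfaint.bdd_mul hmeas1.aestronglyMeasurable (Filter.Eventually.of_forall hbdd1)
  have hhnonneg : ∀ x, 0 ≤ h x := by
    intro x
    by_cases hx : x ∈ A
    · have h1 : A.indicator (fun _ => (1:ℝ)) x = 1 := Set.indicator_of_mem hx _
      have h2 : a ≤ f x := hx
      rw [hh_def]
      simp only [h1]
      exact mul_nonneg (by linarith [(hg01 x).2]) (by linarith)
    · have h1 : A.indicator (fun _ => (1:ℝ)) x = 0 := Set.indicator_of_notMem hx _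
      have h2 : f x < a := lt_of_not_ge hx
      rw [hh_def]
      simp only [h1]
      nlinarith [(hg01 x).1]
  -- integrability of pieces
  have hint_ind : Integrable (fun x => A.indicator (fun _ => (1:ℝ)) x * (f x - a)) μ :=
    hfaint.bdd_mul (measurable_const.indicator hAmeas).aestronglyMeasurable (c := 1)
      (Filter.Eventually.of_forall fun x => by by_cases hx : x ∈ A <;> simp [hx])
  have hint_g : Integrable (fun x => g x * (f x - a)) μ :=
    hfaint.bdd_mul hg.aestronglyMeasurable (c := 1)
      (Filter.Eventually.of_forall fun x => by rw [Real.norm_eq_abs, abs_le]; constructor <;> linarith [(hg01 x).1, (hg01 x).2])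
  have hint_gf : Integrable (fun x => g x * f x) μ :=
    hfint.bdd_mul hg.aestronglyMeasurable (c := 1)
      (Filter.Eventually.of_forall fun x => by rw [Real.norm_eq_abs, abs_le]; constructor <;> linarith [(hg01 x).1, (hg01 x).2])
  have hgintble : Integrable g μ :=
    (integrable_const (1:ℝ)).mono hg.aestronglyMeasurable
      (by filter_upwards with x; rw [Real.norm_eq_abs, abs_le]; simp; constructor <;> linarith [(hg01 x).1, (hg01 x).2])
  -- compute ∫ h = 0
  have hA_int_eq : (∫ x, A.indicator (fun _ => (1:ℝ)) x * (f x - a) ∂μ)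
      = (∫ x in A, f x ∂μ) - a * (μ A).toReal := by
    have : (fun x => A.indicator (fun _ => (1:ℝ)) x * (f x - a))
        = A.indicator (fun x => f x - a) := by
      funext x; by_cases hx : x ∈ A <;> simp [hx]
    rw [this, integral_indicator hAmeas,
      integral_sub (hfint.integrableOn) (integrableOn_const (measure_lt_top μ A).ne)]
    simp [mul_comm, Measure.real]
  have hg_int_eq : (∫ x, g x * (f x - a) ∂μ)
      = (∫ x, g x * f x ∂μ) - a * (∫ x, g x ∂μ) := by
    have : (fun x => g x * (f x - a)) = fun x => g x * f x - a * g x := by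
      funext x; ring
    rw [this, integral_sub hint_gf (hgintble.const_mul a), integral_const_mul]
  have hint0 : (∫ x, h x ∂μ) = 0 := by
    have hsplit : (∫ x, h x ∂μ)
        = (∫ x, A.indicator (fun _ => (1:ℝ)) x * (f x - a) ∂μ)
          - (∫ x, g x * (f x - a) ∂μ) := by
      rw [← integral_sub hint_ind hint_g]
      congr 1; funext x; rw [hh_def]; ring
    rw [hsplit, hA_int_eq, hg_int_eq, hgint, heq]
    ring
  have hae0 : h =ᵐ[μ] 0 :=
    (integral_eq_zero_iff_of_nonneg hhnonneg hhint).1 hint0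
  have hne : ∀ᵐ x ∂μ, f x ≠ a := by
    rw [ae_iff]
    simpa using hcont u hu a
  filter_upwards [hae0, hne] with x hx hxne
  have hx' : (A.indicator (fun _ => (1:ℝ)) x - g x) * (f x - a) = 0 := hx
  rcases mul_eq_zero.1 hx' with h1 | h2
  · exact (sub_eq_zero.1 h1).symm
  · exact absurd (by linarith [sub_eq_zero.1 h2] : f x = a) hxne
end

section
/- Barycenters of half-spaces with respect to a continuous measure are unique: if μ is a probability measure on ℝ^d with finite first moment such that all affine hyperplanes are μ-null, and H, G are closed half-spaces (or the whole space) with μ(H) > 0, μ(G) > 0 and B_H(μ) = B_G(μ), where B_A(μ) = (1/μ(A))∫_A x dμ(x), then μ(H Δ G) = 0. -/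
open MeasureTheory Set

/-- `H` is a closed half-space `{x : ⟨x,u⟩ ≥ a}` (the whole space arises with `u = 0`, `a ≤ 0`). -/
def IsHalfSpace {d : ℕ} (H : Set (EuclideanSpace ℝ (Fin d))) : Prop :=
  ∃ (u : EuclideanSpace ℝ (Fin d)) (a : ℝ), H = {x | a ≤ (inner ℝ x u : ℝ)}

section Aux

variable {d : ℕ} (μ : Measure (EuclideanSpace ℝ (Fin d)))

local notation "E" => EuclideanSpace ℝ (Fin d)

lemma inner_cont (v : E) : Continuous fun x : E => (inner ℝ x v : ℝ) :=
  continuous_id.inner continuous_const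

lemma halfspace_meas (v : E) (b : ℝ) : MeasurableSet {x : E | b ≤ (inner ℝ x v : ℝ)} :=
  (isClosed_le continuous_const (inner_cont v)).measurableSet

lemma integrable_inner_sub [IsProbabilityMeasure μ]
    (hmom : Integrable (fun x => ‖x‖) μ) (v : E) (b : ℝ) :
    Integrable (fun x : E => (inner ℝ x v : ℝ) - b) μ := by
  have h1 : Integrable (fun x : E => (inner ℝ x v : ℝ)) μ := by
    refine Integrable.mono' (hmom.const_mul ‖v‖) ((inner_cont v).aestronglyMeasurable) ?_
    filter_upwards with x
    rw [Real.norm_eq_abs]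
    calc |(inner ℝ x v : ℝ)| ≤ ‖x‖ * ‖v‖ := abs_real_inner_le_norm x v
      _ = ‖v‖ * ‖x‖ := mul_comm _ _
  exact h1.sub (integrable_const b)

/-- Key lemma: strict monotonicity of the linear functional integral for a half-space. -/
lemma key_lt [IsProbabilityMeasure μ]
    (hmom : Integrable (fun x => ‖x‖) μ)
    (hcont : ∀ v : E, v ≠ 0 → ∀ b : ℝ, μ {x | (inner ℝ x v : ℝ) = b} = 0)
    (v : E) (hv : v ≠ 0) (b : ℝ) (A : Set E) (hA : MeasurableSet A)
    (hdiff : μ ({x : E | b ≤ (inner ℝ x v : ℝ)} \ A) ≠ 0 ∨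
      μ (A \ {x : E | b ≤ (inner ℝ x v : ℝ)}) ≠ 0) :
    ∫ x in A, ((inner ℝ x v : ℝ) - b) ∂μ <
      ∫ x in {x : E | b ≤ (inner ℝ x v : ℝ)}, ((inner ℝ x v : ℝ) - b) ∂μ := by
  set K : Set E := {x : E | b ≤ (inner ℝ x v : ℝ)} with hKdef
  set f : E → ℝ := fun x => (inner ℝ x v : ℝ) - b with hfdef
  have hKm : MeasurableSet K := halfspace_meas v b
  have hfi : Integrable f μ := integrable_inner_sub μ hmom v b
  have hsplitK : ∫ x in K ∩ A, f x ∂μ + ∫ x in K \ A, f x ∂μ = ∫ x in K, f x ∂μ :=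
    integral_inter_add_diff hA hfi.integrableOn
  have hsplitA : ∫ x in A ∩ K, f x ∂μ + ∫ x in A \ K, f x ∂μ = ∫ x in A, f x ∂μ :=
    integral_inter_add_diff hKm hfi.integrableOn
  have hKA : ∫ x in K ∩ A, f x ∂μ = ∫ x in A ∩ K, f x ∂μ := by rw [Set.inter_comm]
  -- nonneg on K \ A
  have hnn : (0:ℝ) ≤ ∫ x in K \ A, f x ∂μ := by
    refine setIntegral_nonneg (hKm.diff hA) fun x hx => ?_
    have : b ≤ (inner ℝ x v : ℝ) := hx.1
    simp only [Pi.zero_apply, hfdef]; linarith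
  -- nonpos on A \ K
  have hnp : ∫ x in A \ K, f x ∂μ ≤ 0 := by
    refine setIntegral_nonpos (hA.diff hKm) fun x hx => ?_
    have : ¬ b ≤ (inner ℝ x v : ℝ) := hx.2
    simp only [Pi.zero_apply, hfdef]; linarith
  -- strictness
  have hstrict : 0 < ∫ x in K \ A, f x ∂μ - ∫ x in A \ K, f x ∂μ := by
    rcases hdiff with h | h
    · have hae : 0 ≤ᵐ[μ.restrict (K \ A)] f := by
        filter_upwards [ae_restrict_mem (hKm.diff hA)] with x hx
        have : b ≤ (inner ℝ x v : ℝ) := hx.1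
        simp only [Pi.zero_apply, hfdef]; linarith
      have hpos : 0 < ∫ x in K \ A, f x ∂μ := by
        rw [setIntegral_pos_iff_support_of_nonneg_ae hae hfi.integrableOn]
        have hsub : (K \ A) \ {x : E | (inner ℝ x v : ℝ) = b} ⊆ Function.support f ∩ (K \ A) := by
            intro x hx
            refine ⟨?_, hx.1⟩
            have h1 : b ≤ (inner ℝ x v : ℝ) := hx.1.1
            have h2 : (inner ℝ x v : ℝ) ≠ b := hx.2
            simp only [Function.mem_support, hfdef]
            intro hc; exact h2 (by linarith [sub_eq_zero.mp hc])
        have heq : μ ((K \ A) \ {x : E | (inner ℝ x v : ℝ) = b}) = μ (K \ A) :=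
          measure_diff_null (hcont v hv b)
        calc (0:ENNReal) < μ ((K \ A) \ {x : E | (inner ℝ x v : ℝ) = b}) := by
              rw [heq]; exact pos_iff_ne_zero.mpr h
          _ ≤ μ (Function.support f ∩ (K \ A)) := measure_mono hsub
      linarith
    · have hae : 0 ≤ᵐ[μ.restrict (A \ K)] fun x => -f x := by
        filter_upwards [ae_restrict_mem (hA.diff hKm)] with x hx
        have : ¬ b ≤ (inner ℝ x v : ℝ) := hx.2
        simp only [Pi.zero_apply, hfdef]; linarith
      have hpos : 0 < ∫ x in A \ K, (-f x) ∂μ := by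
        rw [setIntegral_pos_iff_support_of_nonneg_ae hae hfi.neg.integrableOn]
        have hsub : A \ K ⊆ Function.support (fun x => -f x) ∩ (A \ K) := by
            intro x hx
            refine ⟨?_, hx⟩
            have h1 : ¬ b ≤ (inner ℝ x v : ℝ) := hx.2
            simp only [Function.mem_support, hfdef, neg_sub, ne_eq, sub_eq_zero]
            intro hc; exact h1 (le_of_eq hc)
        calc (0:ENNReal) < μ (A \ K) := pos_iff_ne_zero.mpr h
          _ ≤ μ (Function.support (fun x => -f x) ∩ (A \ K)) := measure_mono hsub
      rw [integral_neg] at hpos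
      linarith
  linarith [hsplitK, hsplitA, hKA]

end Aux

theorem barycenter_halfspace_unique (d : ℕ) (μ : Measure (EuclideanSpace ℝ (Fin d)))
    [IsProbabilityMeasure μ] (hmom : Integrable (fun x => ‖x‖) μ)
    (hcont : ∀ v : EuclideanSpace ℝ (Fin d), v ≠ 0 → ∀ b : ℝ,
      μ {x | (inner ℝ x v : ℝ) = b} = 0)
    (H G : Set (EuclideanSpace ℝ (Fin d))) (hH : IsHalfSpace H) (hG : IsHalfSpace G)
    (hHpos : 0 < μ H) (hGpos : 0 < μ G)
    (hbar : ((μ H).toReal)⁻¹ • (∫ x in H, x ∂μ) = ((μ G).toReal)⁻¹ • ∫ x in G, x ∂μ) :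
    μ (symmDiff H G) = 0 := by
  classical
  obtain ⟨u, a, hHu⟩ := hH
  obtain ⟨v, b, hGv⟩ := hG
  by_contra hne
  -- basic data
  set p : ℝ := (μ H).toReal with hp
  set q : ℝ := (μ G).toReal with hq
  have hμH1 : μ H ≤ 1 := (measure_mono (subset_univ H)).trans_eq measure_univ
  have hμG1 : μ G ≤ 1 := (measure_mono (subset_univ G)).trans_eq measure_univ
  have hHfin : μ H ≠ ⊤ := by exact ne_top_of_le_ne_top (by simp) hμH1
  have hGfin : μ G ≠ ⊤ := by exact ne_top_of_le_ne_top (by simp) hμG1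
  have hppos : 0 < p := ENNReal.toReal_pos hHpos.ne' hHfin
  have hqpos : 0 < q := ENNReal.toReal_pos hGpos.ne' hGfin
  have hp1 : p ≤ 1 := by
    rw [hp]; exact ENNReal.toReal_le_of_le_ofReal zero_le_one (by simpa using hμH1)
  have hq1 : q ≤ 1 := by
    rw [hq]; exact ENNReal.toReal_le_of_le_ofReal zero_le_one (by simpa using hμG1)
  have hHm : MeasurableSet H := hHu ▸ halfspace_meas u a
  have hGm : MeasurableSet G := hGv ▸ halfspace_meas v b
  -- integrability of identity
  have hid : Integrable (fun x : EuclideanSpace ℝ (Fin d) => x) μ :=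
    (integrable_norm_iff aestronglyMeasurable_id).mp hmom
  -- barycenter
  set m : EuclideanSpace ℝ (Fin d) := p⁻¹ • ∫ x in H, x ∂μ with hm
  have hIH : ∫ x in H, x ∂μ = p • m := by
    rw [hm, smul_smul, mul_inv_cancel₀ hppos.ne', one_smul]
  have hIG : ∫ x in G, x ∂μ = q • m := by
    rw [hbar, smul_smul, mul_inv_cancel₀ hqpos.ne', one_smul]
  -- integral computation
  have hcompute : ∀ (w : EuclideanSpace ℝ (Fin d)) (c : ℝ) (A : Set (EuclideanSpace ℝ (Fin d))),
      MeasurableSet A → ∫ x in A, x ∂μ = (μ A).toReal • m →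
      ∫ x in A, ((inner ℝ x w : ℝ) - c) ∂μ = (μ A).toReal * ((inner ℝ m w : ℝ) - c) := by
    intro w c A hAm hIA
    have hi : Integrable (fun x : EuclideanSpace ℝ (Fin d) => (inner ℝ x w : ℝ)) μ :=
      by simpa using (integrable_inner_sub μ hmom w 0)
    have h1 : ∫ x in A, ((inner ℝ x w : ℝ)) ∂μ = (inner ℝ (∫ x in A, x ∂μ) w : ℝ) := by
      rw [real_inner_comm, ← integral_inner hid.integrableOn w]
      refine integral_congr_ae (Filter.Eventually.of_forall fun x => ?_)
      exact real_inner_comm w x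
    have h2 : ∫ x in A, ((inner ℝ x w : ℝ) - c) ∂μ
        = (∫ x in A, ((inner ℝ x w : ℝ)) ∂μ) - (μ A).toReal * c := by
      rw [integral_sub hi.integrableOn (integrable_const c)]
      simp [Measure.restrict_apply_univ, Measure.real]
    rw [h2, h1, hIA, real_inner_smul_left]
    ring
  have hdiff : μ (H \ G) ≠ 0 ∨ μ (G \ H) ≠ 0 := by
    by_contra hc
    push_neg at hc
    apply hne
    rw [Set.symmDiff_def]
    exact le_antisymm ((measure_union_le _ _).trans (by rw [hc.1, hc.2]; simp)) (zero_le)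
  -- claim: if u ≠ 0 then q < p
  have claim : ∀ (w : EuclideanSpace ℝ (Fin d)), w ≠ 0 →
      ∀ c : ℝ, ∀ A B : Set (EuclideanSpace ℝ (Fin d)),
      A = {x | c ≤ (inner ℝ x w : ℝ)} → MeasurableSet B →
      μ (A \ B) ≠ 0 ∨ μ (B \ A) ≠ 0 →
      ∫ x in A, x ∂μ = (μ A).toReal • m → ∫ x in B, x ∂μ = (μ B).toReal • m →
      0 < μ A → (μ B).toReal < (μ A).toReal := by
    intro w hw c A B hAdef hBm hd hIA hIB hApos
    have hAm : MeasurableSet A := hAdef ▸ halfspace_meas w c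
    have hlt := key_lt μ hmom hcont w hw c B hBm (by rw [← hAdef]; exact hd)
    rw [← hAdef] at hlt
    rw [hcompute w c A hAm hIA, hcompute w c B hBm hIB] at hlt
    -- also inner m w - c ≥ 0
    have hAfin : μ A ≠ ⊤ := ne_top_of_le_ne_top (by simp)
      ((measure_mono (subset_univ A)).trans_eq measure_univ)
    have hAr : 0 < (μ A).toReal := ENNReal.toReal_pos hApos.ne' hAfin
    have hnn : 0 ≤ (μ A).toReal * ((inner ℝ m w : ℝ) - c) := by
      rw [← hcompute w c A hAm hIA]
      refine setIntegral_nonneg hAm fun x hx => ?_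
      have : c ≤ (inner ℝ x w : ℝ) := by rw [hAdef] at hx; exact hx
      linarith
    have hc0 : 0 ≤ (inner ℝ m w : ℝ) - c := by
      by_contra hcc; push_neg at hcc; nlinarith
    nlinarith [mul_le_mul_of_nonneg_right (le_of_lt hAr) hc0]
  -- case analysis on u
  by_cases hu : u = 0
  · -- H = univ, p = 1
    have hHuniv : H = univ := by
      rw [hHu, hu]
      ext x
      simp only [mem_setOf_eq, inner_zero_right, mem_univ, iff_true]
      by_contra hax
      have : H = ∅ := by
        rw [hHu, hu]; ext y; simp only [mem_setOf_eq, inner_zero_right, mem_empty_iff_false,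
          iff_false]; exact hax
      rw [this] at hHpos; simp at hHpos
    by_cases hv0 : v = 0
    · have hGuniv : G = univ := by
        rw [hGv, hv0]
        ext x
        simp only [mem_setOf_eq, inner_zero_right, mem_univ, iff_true]
        by_contra hbx
        have : G = ∅ := by
          rw [hGv, hv0]; ext y; simp only [mem_setOf_eq, inner_zero_right, mem_empty_iff_false,
            iff_false]; exact hbx
        rw [this] at hGpos; simp at hGpos
      exact hne (by rw [hHuniv, hGuniv]; simp)
    · -- v ≠ 0: p < q, but p = 1 and q ≤ 1, contradiction
      have hlt : p < q := claim v hv0 b G H hGv hHm hdiff.symm hIG hIH hGpos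
      have hp1' : p = 1 := by rw [hp, hHuniv]; simp
      linarith
  · -- u ≠ 0 : q < p
    have h1 : q < p := claim u hu a H G hHu hGm hdiff hIH hIG hHpos
    by_cases hv0 : v = 0
    · have hGuniv : G = univ := by
        rw [hGv, hv0]
        ext x
        simp only [mem_setOf_eq, inner_zero_right, mem_univ, iff_true]
        by_contra hbx
        have : G = ∅ := by
          rw [hGv, hv0]; ext y; simp only [mem_setOf_eq, inner_zero_right, mem_empty_iff_false,
            iff_false]; exact hbx
        rw [this] at hGpos; simp at hGpos
      have hq1' : q = 1 := by rw [hq, hGuniv]; simp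
      linarith
    · have h2 : p < q := claim v hv0 b G H hGv hHm hdiff.symm hIG hIH hGpos
      linarith
end
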